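/- Let ℳ ⊆ 𝕋² be a connected minimal set of a homeomorphism f : 𝕋² → 𝕋², and assume there exists a bounded topological disk D₀ which is a connected component of ℳᶜ and is periodic of period p (i.e. f^p(D₀) = D₀ and p is minimal with this property). Then ℳ = ∂D₀ = ∂D₁ = ... = ∂D_{p−1}, where D_k = f^k(D₀) for k = 1, ..., p−1. -/

import Mathlib

open Set Topology Filter

noncomputable section

/-- The one-dimensional torus (circle) `𝕋¹ = ℝ/ℤ`. -/
abbrev T1 := AddCircle (1 : ℝ)
/-- The plane `ℝ²`. -/
abbrev R2 := ℝ × ℝ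
/-- The two-dimensional torus `𝕋² = ℝ²/ℤ²`. -/
abbrev T2 := T1 × T1
/-- The open annulus `𝔸 = 𝕋¹ × ℝ`. -/
abbrev Ann := T1 × ℝ

/-- The canonical projection `π : ℝ² → 𝕋²`. -/
def proj : R2 → T2 := fun z => ((z.1 : T1), (z.2 : T1))

/-- The point of `ℝ²` corresponding to an integer vector. -/
def intVec (v : ℤ × ℤ) : R2 := ((v.1 : ℝ), (v.2 : ℝ))

/-- `U` is a connected component of `S`. -/
def IsCCOf {α : Type*} [TopologicalSpace α] (U S : Set α) : Prop :=
  ∃ x ∈ S, U = connectedComponentIn S x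

/-- A set `A ⊆ 𝕋²` is bounded if all connected components of `π⁻¹(A)` are bounded in `ℝ²`. -/
def BoundedLift (A : Set T2) : Prop :=
  ∀ x ∈ proj ⁻¹' A, Bornology.IsBounded (connectedComponentIn (proj ⁻¹' A) x)

/-- An open topological disk in `𝕋²`: an open set homeomorphic to the open unit disk. -/
def IsTopDisk (D : Set T2) : Prop :=
  IsOpen D ∧ Nonempty (D ≃ₜ (Metric.ball (0:ℂ) 1))

/-- `U ⊆ 𝕋²` contains a closed curve of homotopy type `v ∈ ℤ²`, i.e. there is a continuous
path `Γ` in `ℝ²` whose projection stays in `U` and whose endpoints differ by the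
integer vector `v` (so that the projection is a loop of homotopy type `v`). -/
def LoopOfType (U : Set T2) (v : ℤ × ℤ) : Prop :=
  ∃ Γ : C(ℝ, R2), (∀ t ∈ Icc (0:ℝ) 1, proj (Γ t) ∈ U) ∧ Γ 1 = Γ 0 + intVec v

/-- The subgroup of `π₁(𝕋²) ≅ ℤ²` generated by classes of loops contained in `U`. -/
def loopGroup (U : Set T2) : AddSubgroup (ℤ × ℤ) :=
  AddSubgroup.closure {v : ℤ × ℤ | LoopOfType U v}

/-- A homotopically trivial subset of `𝕋²`: every loop in `U` is trivial in `𝕋²`. -/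
def TrivialSet (U : Set T2) : Prop := loopGroup U = ⊥

/-- A doubly essential open connected subset of `𝕋²`: the classes of loops in `U`
generate all of `π₁(𝕋²) ≅ ℤ²`. -/
def IsDoublyEssential (U : Set T2) : Prop :=
  IsOpen U ∧ IsConnected U ∧ loopGroup U = ⊤

/-- An essential annulus in `𝕋²`: an open set homeomorphic to `𝕋¹ × ℝ` containing a
homotopically non-trivial closed curve of `𝕋²`. -/
def IsEssentialAnnulus (A : Set T2) : Prop :=
  IsOpen A ∧ Nonempty (A ≃ₜ Ann) ∧ ∃ v : ℤ × ℤ, v ≠ 0 ∧ LoopOfType A v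

/-- A minimal set of `f`: non-empty, compact, `f`-invariant, and minimal with respect to
inclusion among such sets. -/
def IsMinimalSet (f : T2 → T2) (M : Set T2) : Prop :=
  M.Nonempty ∧ IsCompact M ∧ f '' M = M ∧
    ∀ K : Set T2, K ⊆ M → K.Nonempty → IsCompact K → f '' K = K → K = M

/-- A set is periodic for `f` if some positive iterate of `f` maps it onto itself. -/
def IsPeriodicSet (f : T2 → T2) (U : Set T2) : Prop := ∃ n : ℕ, 1 ≤ n ∧ f^[n] '' U = U

/-- A subset of the annulus is unbounded above. -/
def UnbAbove (S : Set Ann) : Prop := ∀ r : ℝ, ∃ z ∈ S, r < z.2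
/-- A subset of the annulus is unbounded below. -/
def UnbBelow (S : Set Ann) : Prop := ∀ r : ℝ, ∃ z ∈ S, z.2 < r

/-- An annular continuum in `𝔸`: compact, connected, and its complement has exactly two
connected components, one unbounded below and the other unbounded above. -/
def IsAnnularContinuumAnn (C : Set Ann) : Prop :=
  IsCompact C ∧ IsConnected C ∧
    ∃ Um Up : Set Ann, IsCCOf Um Cᶜ ∧ IsCCOf Up Cᶜ ∧ Um ≠ Up ∧
      UnbBelow Um ∧ UnbAbove Up ∧ ∀ W, IsCCOf W Cᶜ → W = Um ∨ W = Up

/-- A circloid in `𝔸`: an annular continuum which is minimal with respect to inclusion. -/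
def IsCircloidAnn (C : Set Ann) : Prop :=
  IsAnnularContinuumAnn C ∧ ∀ C' ⊆ C, IsAnnularContinuumAnn C' → C' = C

/-- The homotopy type in `𝕋²` of a (closed) curve `g : ℝ → 𝕋²` (restricted to `[0,1]`),
computed through a lift to `ℝ²`. -/
def MapLoopOfType (g : ℝ → T2) (v : ℤ × ℤ) : Prop :=
  ∃ Γ : C(ℝ, R2), (∀ t ∈ Icc (0:ℝ) 1, proj (Γ t) = g t) ∧ Γ 1 = Γ 0 + intVec v

/-- A circloid in `𝕋²`: a set contained in an embedded open annulus `𝒜 ⊆ 𝕋²` whose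
preimage in `𝔸` is a circloid. -/
def IsCircloid (A : Set T2) : Prop :=
  ∃ φ : Ann → T2, IsOpenEmbedding φ ∧ A ⊆ range φ ∧ IsCircloidAnn (φ ⁻¹' A)

/-- An essential circloid in `𝕋²`: the essential loops of the surrounding embedded
annulus are homotopically non-trivial in `𝕋²`. -/
def IsEssentialCircloid (A : Set T2) : Prop :=
  ∃ φ : Ann → T2, IsOpenEmbedding φ ∧ A ⊆ range φ ∧ IsCircloidAnn (φ ⁻¹' A) ∧
    ∃ v : ℤ × ℤ, v ≠ 0 ∧ MapLoopOfType (fun t : ℝ => φ ((t : T1), 0)) v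

/-- A homotopically trivial circloid in `𝕋²`: the essential loops of the surrounding
embedded annulus are homotopically trivial in `𝕋²`. -/
def IsTrivialCircloid (A : Set T2) : Prop :=
  ∃ φ : Ann → T2, IsOpenEmbedding φ ∧ A ⊆ range φ ∧ IsCircloidAnn (φ ⁻¹' A) ∧
    MapLoopOfType (fun t : ℝ => φ ((t : T1), 0)) 0

/-- `(f, M)` is an extension of `(g, N)`: `g` is a homeomorphism with minimal set `N`, and
there is a continuous surjection `Φ`, homotopic to the identity, with `Φ ∘ f = g ∘ Φ` and
`Φ(M) = N`. -/
def IsExtensionOf (f : T2 → T2) (M : Set T2) (g : T2 → T2) (N : Set T2) : Prop :=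
  IsHomeomorph g ∧ IsMinimalSet g N ∧
    ∃ Φ : C(T2, T2), Function.Surjective Φ ∧ Φ.Homotopic (ContinuousMap.id T2) ∧
      (∀ x, Φ (f x) = g (Φ x)) ∧ Φ '' M = N

/-- A Cantor set: non-empty, compact, perfect and totally disconnected. -/
def IsCantorSet (N : Set T2) : Prop :=
  N.Nonempty ∧ IsCompact N ∧ Perfect N ∧ IsTotallyDisconnected N

/-- `M` is an extension of a Cantor set. -/
def ExtensionOfCantor (f : T2 → T2) (M : Set T2) : Prop :=
  ∃ g N, IsExtensionOf f M g N ∧ IsCantorSet N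

/-- `M` is an extension of a periodic orbit (a finite minimal set). -/
def ExtensionOfPeriodicOrbit (f : T2 → T2) (M : Set T2) : Prop :=
  ∃ g N, IsExtensionOf f M g N ∧ N.Finite

/-- Type 1: the complement of `M` is a disjoint union of topological disks. -/
def Type1 (M : Set T2) : Prop := ∀ U, IsCCOf U Mᶜ → IsTopDisk U

/-- Type 2: the complement of `M` is a disjoint union of at least one essential annulus
and topological disks. -/
def Type2 (M : Set T2) : Prop :=
  (∃ U, IsCCOf U Mᶜ ∧ IsEssentialAnnulus U) ∧
    ∀ U, IsCCOf U Mᶜ → IsTopDisk U ∨ IsEssentialAnnulus U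

/-- Type 3: the complement of `M` is a disjoint union of exactly one doubly essential
component and bounded topological disks. -/
def Type3 (M : Set T2) : Prop :=
  ∃ U, IsCCOf U Mᶜ ∧ IsDoublyEssential U ∧
    ∀ V, IsCCOf V Mᶜ → V = U ∨ (IsTopDisk V ∧ BoundedLift V)

/-- `f` is semi-conjugate to an irrational rotation of `𝕋¹`. -/
def SemiconjToIrrationalRotation (f : T2 → T2) : Prop :=
  ∃ h : C(T2, T1), Function.Surjective h ∧
    ∃ α : ℝ, Irrational α ∧ ∀ x, h (f x) = h x + (α : T1)

/-- `f` is non-wandering: no non-empty open set is disjoint from all its forward iterates. -/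
def NonWandering (f : T2 → T2) : Prop :=
  ¬ ∃ U : Set T2, IsOpen U ∧ U.Nonempty ∧ ∀ n : ℕ, 1 ≤ n → f^[n] '' U ∩ U = ∅

/-- The rotation set of a lift `F : ℝ² → ℝ²`. -/
def rotSet (F : R2 → R2) : Set R2 :=
  {ρ | ∃ (z : ℕ → R2) (n : ℕ → ℕ), StrictMono n ∧
    Tendsto (fun i => ((n i : ℝ))⁻¹ • (F^[n i] (z i) - z i)) atTop (nhds ρ)}


/-- If a connected minimal set `M` of a torus homeomorphism has a periodic bounded disk
`D₀` of period `p` among the connected components of `Mᶜ`, then `M` coincides with the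
boundary of each of the disks `D_k = f^k(D₀)`, `k = 0, …, p-1`. -/
theorem exists_minimal_invariant_subset {α : Type*} [TopologicalSpace α] [T2Space α]
    {g : α → α} (hg : Continuous g) {K : Set α} (hK : IsCompact K) (hKne : K.Nonempty)
    (hKcl : IsClosed K) (hKinv : g '' K ⊆ K) :
    ∃ N ⊆ K, N.Nonempty ∧ IsCompact N ∧ g '' N = N ∧
      ∀ a ⊆ N, a.Nonempty → IsClosed a → g '' a ⊆ a → a = N := by
  set S : Set (Set α) := {A | A ⊆ K ∧ A.Nonempty ∧ IsClosed A ∧ g '' A ⊆ A} with hS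
  have hcomp : ∀ A ∈ S, IsCompact A := fun A hA => hK.of_isClosed_subset hA.2.2.1 hA.1
  have Hchain : ∀ c ⊆ S, IsChain (· ⊆ ·) c → c.Nonempty → ∃ lb ∈ S, ∀ s ∈ c, lb ⊆ s := by
    intro c hcS hchain hcne
    have : Nonempty c := hcne.to_subtype
    refine ⟨⋂₀ c, ⟨?_, ?_, ?_, ?_⟩, fun s hs => sInter_subset_of_mem hs⟩
    · obtain ⟨A, hA⟩ := hcne
      exact (sInter_subset_of_mem hA).trans (hcS hA).1
    · have hdir : DirectedOn (· ⊇ ·) c := by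
        intro A hA B hB
        rcases hchain.total hA hB with h | h
        · exact ⟨A, hA, subset_refl A, h⟩
        · exact ⟨B, hB, h, subset_refl B⟩
      exact IsCompact.nonempty_sInter_of_directed_nonempty_isCompact_isClosed
        hdir (fun U hU => (hcS hU).2.1) (fun U hU => hcomp U (hcS hU))
        (fun U hU => (hcS hU).2.2.1)
    · exact isClosed_sInter fun U hU => (hcS hU).2.2.1
    · rintro x ⟨y, hy, rfl⟩
      intro U hU
      exact (hcS hU).2.2.2 ⟨y, hy U hU, rfl⟩
  obtain ⟨N, hNx, hNmem, hNmin⟩ := zorn_superset_nonempty S Hchain K ⟨le_refl K, hKne, hKcl, hKinv⟩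
  · have hNS : N ∈ S := hNmem
    have hgN : g '' N = N := by
      have h1 : g '' N ∈ S := by
        refine ⟨(hNS.2.2.2).trans hNS.1, hNS.2.1.image g,
          ((hcomp N hNS).image hg).isClosed, image_mono hNS.2.2.2⟩
      have := hNmin h1 hNS.2.2.2
      exact le_antisymm hNS.2.2.2 this
    refine ⟨N, hNS.1, hNS.2.1, hcomp N hNS, hgN, fun a ha hane hacl hainv => ?_⟩
    exact le_antisymm ha (hNmin ⟨ha.trans hNS.1, hane, hacl, hainv⟩ ha)

theorem minimal_equals_boundaries_of_periodic_disk
    (f : T2 → T2) (hf : IsHomeomorph f)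
    (M : Set T2) (hM : IsMinimalSet f M) (hMconn : IsConnected M)
    (D0 : Set T2) (hD0 : IsCCOf D0 Mᶜ) (hdisk : IsTopDisk D0) (hbdd : BoundedLift D0)
    (p : ℕ) (hp : 1 ≤ p) (hper : f^[p] '' D0 = D0)
    (hpmin : ∀ k : ℕ, 1 ≤ k → k < p → f^[k] '' D0 ≠ D0) :
    ∀ k < p, M = frontier (f^[k] '' D0) := by
  obtain ⟨e, hfe⟩ := isHomeomorph_iff_exists_homeomorph.mp hf
  subst hfe
  obtain ⟨hMne, hMcomp, hMinv, hMmin⟩ := hM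
  have hMcl : IsClosed M := hMcomp.isClosed
  obtain ⟨x0, hx0, hD0eq⟩ := hD0
  have hD0ne : D0.Nonempty := ⟨x0, hD0eq ▸ mem_connectedComponentIn hx0⟩
  have hD0sub : D0 ⊆ Mᶜ := hD0eq ▸ connectedComponentIn_subset _ _
  have hD0open : IsOpen D0 := hdisk.1
  have hD0conn : IsPreconnected D0 := hD0eq ▸ isPreconnected_connectedComponentIn
  -- frontier of D0 is contained in M
  have hKM : frontier D0 ⊆ M := by
    intro x hx
    by_contra hxM
    have hxc : x ∈ Mᶜ := hxM
    have hins : insert x D0 ⊆ closure D0 :=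
      insert_subset hx.1 subset_closure
    have hconn : IsPreconnected (insert x D0) :=
      hD0conn.subset_closure (subset_insert x D0) hins
    have hsubcc : insert x D0 ⊆ connectedComponentIn Mᶜ x0 :=
      hconn.subset_connectedComponentIn (mem_insert_iff.mpr (Or.inr (hD0eq ▸ mem_connectedComponentIn hx0)))
        (insert_subset hxc hD0sub)
    have hxD0 : x ∈ D0 := hD0eq ▸ hsubcc (mem_insert x D0)
    rw [hD0open.frontier_eq] at hx
    exact hx.2 hxD0
  have hKne : (frontier D0).Nonempty := by
    by_contra h
    rw [Set.not_nonempty_iff_eq_empty] at h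
    have hclopen : IsClopen D0 := isClopen_iff_frontier_eq_empty.mpr h
    have := hclopen.eq_univ hD0ne
    obtain ⟨m, hm⟩ := hMne
    exact hD0sub (this ▸ mem_univ m) hm
  have hKcl : IsClosed (frontier D0) := isClosed_frontier
  have hKcomp : IsCompact (frontier D0) := hMcomp.of_isClosed_subset hKcl hKM
  -- iterates and frontiers
  have hiter : ∀ (n : ℕ) (s : Set T2), (⇑e)^[n] '' frontier s = frontier ((⇑e)^[n] '' s) := by
    intro n
    induction n with
    | zero => simp
    | succ n ih =>
      intro s
      rw [Function.iterate_succ', Set.image_comp, ih, e.image_frontier, ← Set.image_comp]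
  have hKinv : (⇑e)^[p] '' (frontier D0) = (frontier D0) := by rw [hiter, hper]
  have hgc : Continuous ((⇑e)^[p]) := e.continuous.iterate p
  obtain ⟨N, hNK, hNne, hNcomp, hgN, hNmin⟩ :=
    exists_minimal_invariant_subset hgc hKcomp hKne hKcl hKinv.le
  have hNM : N ⊆ M := hNK.trans hKM
  have hNcl : IsClosed N := hNcomp.isClosed
  -- the iterates of N
  set Ni : ℕ → Set T2 := fun i => (⇑e)^[i] '' N with hNi
  have hNicomp : ∀ i, IsCompact (Ni i) := fun i => hNcomp.image (e.continuous.iterate i)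
  have hNicl : ∀ i, IsClosed (Ni i) := fun i => (hNicomp i).isClosed
  have hNine : ∀ i, (Ni i).Nonempty := fun i => hNne.image _
  have hcommpi : ∀ i, (⇑e)^[p] '' Ni i = Ni i := by
    intro i
    simp only [hNi]
    rw [← Set.image_comp, ← Function.iterate_add, Nat.add_comm p i, Function.iterate_add,
      Set.image_comp, hgN]
  have hMinvn : ∀ i, (⇑e)^[i] '' M = M := by
    intro i
    induction i with
    | zero => simp
    | succ n ih => rw [Function.iterate_succ', Set.image_comp, ih, hMinv]
  have hNiM : ∀ i, Ni i ⊆ M := by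
    intro i
    calc Ni i ⊆ (⇑e)^[i] '' M := Set.image_mono hNM
    _ = M := hMinvn i
  -- the union of the Ni is M
  set U := ⋃ i ∈ Finset.range p, Ni i with hU
  have hNp : Ni p = N := hgN
  have hstep : ∀ i, ⇑e '' Ni i = Ni (i + 1) := by
    intro i
    simp only [hNi]
    rw [← Set.image_comp, ← Function.iterate_succ']
  have hUM : U = M := by
    refine hMmin U ?_ ?_ ?_ ?_
    · exact Set.iUnion₂_subset fun i _ => hNiM i
    · obtain ⟨n0, hn0⟩ := hNne
      have h0 : n0 ∈ Ni 0 := by simpa [hNi] using hn0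
      exact ⟨n0, Set.mem_biUnion (Finset.mem_range.mpr hp) h0⟩
    · exact (Finset.range p).finite_toSet.isCompact_biUnion fun i _ => hNicomp i
    · apply le_antisymm
      · rintro x ⟨y, hy, rfl⟩
        simp only [hU, Set.mem_iUnion] at hy ⊢
        obtain ⟨i, hi, hyi⟩ := hy
        have hmem : ⇑e y ∈ Ni (i + 1) := (hstep i) ▸ ⟨y, hyi, rfl⟩
        rcases Nat.lt_or_ge (i + 1) p with h | h
        · exact ⟨i + 1, Finset.mem_range.mpr h, hmem⟩
        · have hip : i + 1 = p := le_antisymm (Finset.mem_range.mp hi) h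
          have h0 : Ni 0 = N := by simp [hNi]
          refine ⟨0, Finset.mem_range.mpr hp, ?_⟩
          rw [h0, ← hNp, ← hip]
          exact hmem
      · intro x hx
        simp only [hU, Set.mem_iUnion] at hx
        obtain ⟨i, hi, hxi⟩ := hx
        rcases Nat.eq_zero_or_pos i with rfl | hipos
        · have hxNp : x ∈ Ni p := by rw [hNp]; simpa [hNi] using hxi
          obtain ⟨y, hy, rfl⟩ : x ∈ ⇑e '' Ni (p - 1) := by
            rw [hstep (p-1), Nat.sub_add_cancel hp]; exact hxNp
          exact ⟨y, Set.mem_biUnion (Finset.mem_range.mpr (Nat.sub_lt hp Nat.one_pos)) hy, rfl⟩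
        · obtain ⟨y, hy, rfl⟩ : x ∈ ⇑e '' Ni (i - 1) := by
            rw [hstep (i-1), Nat.sub_add_cancel hipos]; exact hxi
          refine ⟨y, Set.mem_biUnion (Finset.mem_range.mpr ?_) hy, rfl⟩
          exact lt_of_le_of_lt (Nat.sub_le i 1) (Finset.mem_range.mp hi)
  -- equal-or-disjoint
  have hdisj : ∀ i, (Ni i ∩ N).Nonempty → Ni i = N := by
    intro i hne
    set C := Ni i ∩ N with hC
    have hCcl : IsClosed C := (hNicl i).inter hNcl
    have hCinv : (⇑e)^[p] '' C ⊆ C := by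
      calc (⇑e)^[p] '' C ⊆ ((⇑e)^[p] '' Ni i) ∩ ((⇑e)^[p] '' N) := Set.image_inter_subset _ _ _
      _ = C := by rw [hcommpi i, hgN]
    have hCN : C = N := hNmin C Set.inter_subset_right hne hCcl hCinv
    -- now pull back by e.symm^[i]
    have hLI : Function.LeftInverse (⇑e.symm)^[i] ((⇑e)^[i]) :=
      Function.LeftInverse.iterate e.symm_apply_apply i
    have hRI : Function.LeftInverse ((⇑e)^[i]) ((⇑e.symm)^[i]) :=
      Function.LeftInverse.iterate e.apply_symm_apply i
    set b := (⇑e.symm)^[i] '' C with hb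
    have hbN : b ⊆ N := by
      rw [hb]
      rintro x ⟨y, hy, rfl⟩
      obtain ⟨z, hz, rfl⟩ := hy.1
      rw [hLI z]; exact hz
    have hbne : b.Nonempty := hne.image _
    have hbcl : IsClosed b := (((hNicomp i).inter_right hNcl).image
      (e.symm.continuous.iterate i)).isClosed
    have hcomm0 : Function.Commute ⇑e ⇑e.symm := by
      intro x
      simp
    have hcomm2 : Function.Commute ((⇑e)^[p]) ((⇑e.symm)^[i]) :=
      Function.Commute.iterate_iterate hcomm0 p i
    have hbinv : (⇑e)^[p] '' b ⊆ b := by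
      rw [hb, ← Set.image_comp, hcomm2.comp_eq, Set.image_comp]
      exact Set.image_mono hCinv
    have hbeq : b = N := hNmin b hbN hbne hbcl hbinv
    have hCi : C = Ni i := by
      have := congrArg (fun s => (⇑e)^[i] '' s) hbeq
      simp only [hb] at this
      rw [← Set.image_comp] at this
      have h2 : (⇑e)^[i] ∘ (⇑e.symm)^[i] = id := funext hRI
      rw [h2, Set.image_id] at this
      rw [this]
    rw [← hCN, hCi]
  -- connectedness argument
  classical
  set B := ⋃ i ∈ (Finset.range p).filter (fun i => Ni i ≠ N), Ni i with hB
  have hBcl : IsClosed B := by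
    apply Set.Finite.isClosed_biUnion (Finset.finite_toSet _)
    exact fun i _ => hNicl i
  have hNB : Disjoint N B := by
    rw [Set.disjoint_right]
    rintro x hxB hxN
    simp only [hB, Set.mem_iUnion, Finset.mem_filter] at hxB
    obtain ⟨i, ⟨_, hiNe⟩, hxi⟩ := hxB
    exact hiNe (hdisj i ⟨x, hxi, hxN⟩)
  have hcover : M ⊆ N ∪ B := by
    intro x hx
    rw [← hUM] at hx
    simp only [hU, Set.mem_iUnion] at hx
    obtain ⟨i, hi, hxi⟩ := hx
    by_cases h : Ni i = N
    · exact Or.inl (h ▸ hxi)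
    · refine Or.inr ?_
      simp only [hB, Set.mem_iUnion, Finset.mem_filter]
      exact ⟨i, ⟨hi, h⟩, hxi⟩
  have hMN : M ⊆ N := by
    by_contra hMNc
    obtain ⟨z, hzM, hzN⟩ : (M ∩ Nᶜ).Nonempty := by
      rw [Set.inter_compl_nonempty_iff]; exact hMNc
    have hpc := hMconn.isPreconnected
    have h1 : M ⊆ Bᶜ ∪ Nᶜ := by
      intro x hx
      by_cases hxN : x ∈ N
      · exact Or.inl (fun hxB => (Set.disjoint_left.mp hNB hxN) hxB)
      · exact Or.inr hxN
    have h2 : (M ∩ Bᶜ).Nonempty := by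
      obtain ⟨n, hn⟩ := hNne
      exact ⟨n, hNM hn, fun hnB => (Set.disjoint_left.mp hNB hn) hnB⟩
    have h3 : (M ∩ Nᶜ).Nonempty := ⟨z, hzM, hzN⟩
    obtain ⟨w, hwM, hwB, hwN⟩ := hpc Bᶜ Nᶜ hBcl.isOpen_compl hNcl.isOpen_compl h1 h2 h3
    rcases hcover hwM with h | h
    · exact hwN h
    · exact hwB h
  have hMK : M = (frontier D0) := le_antisymm (hMN.trans hNK) hKM
  -- conclude
  intro k _
  rw [← hiter k D0, ← hMK, hMinvn k]

end
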